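/- Let g ∈ SO(4) correspond under the quaternion double cover to the pair ((cos α, sin α·v); (cos β, sin β·w)) with unit vectors v, w ∈ ℝ³, i.e. g(q) = l q r⁻¹ with l = (cos α, sin α v), r = (cos β, sin β w). Then dim Fix⟨g⟩ = 2 if and only if cos α = cos β (assuming g ≠ ±Id). -/

import Mathlib

open Quaternion

private lemma qsum_of_norm (v : Quaternion ℝ) (hv : v.re = 0) (hvn : ‖v‖ = 1) :
    v.imI ^ 2 + v.imJ ^ 2 + v.imK ^ 2 = 1 := by
  have h := Quaternion.normSq_eq_norm_mul_self v
  rw [hvn, Quaternion.normSq_def'] at h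
  rw [hv] at h
  nlinarith [h]

private lemma qsq_neg_one (v : Quaternion ℝ) (hv : v.re = 0)
    (hn : v.imI ^ 2 + v.imJ ^ 2 + v.imK ^ 2 = 1) : v * v = -1 := by
  ext <;> simp [Quaternion.re_mul, Quaternion.imI_mul, Quaternion.imJ_mul, Quaternion.imK_mul, hv]
    <;> nlinarith [hn]

private lemma qcomm (v p : Quaternion ℝ) (hv : v.re = 0)
    (hn : v.imI ^ 2 + v.imJ ^ 2 + v.imK ^ 2 = 1) (h : v * p = p * v) :
    p = (p.re : Quaternion ℝ) + (v.imI * p.imI + v.imJ * p.imJ + v.imK * p.imK) • v := by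
  rw [Quaternion.ext_iff] at h
  simp only [Quaternion.re_mul, Quaternion.imI_mul, Quaternion.imJ_mul, Quaternion.imK_mul,
    hv, zero_mul, mul_zero, zero_add, add_zero, zero_sub, sub_zero] at h
  obtain ⟨h1, h2, h3, h4⟩ := h
  have c1 : v.imJ * p.imK - v.imK * p.imJ = 0 := by linear_combination h2 / 2
  have c2 : v.imK * p.imI - v.imI * p.imK = 0 := by linear_combination h3 / 2
  have c3 : v.imI * p.imJ - v.imJ * p.imI = 0 := by linear_combination h4 / 2
  ext <;> simp [hv]
  · linear_combination (-v.imJ) * c3 + v.imK * c2 - p.imI * hn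
  · linear_combination (-v.imK) * c1 + v.imI * c3 - p.imJ * hn
  · linear_combination (-v.imI) * c2 + v.imJ * c1 - p.imK * hn

private lemma qanti (v x : Quaternion ℝ) (hv2 : v * v = -1) :
    v * (x + v * x * v) = (x + v * x * v) * (-v) := by
  have h1 : v * (x + v * x * v) = v * x + (v * v) * x * v := by noncomm_ring
  have h2 : (x + v * x * v) * (-v) = -(x * v) - v * x * ((v * v)) := by noncomm_ring
  rw [h1, h2, hv2]
  noncomm_ring

private lemma qexists (v w : Quaternion ℝ) (hv : v.re = 0) (hw : w.re = 0)
    (hvn : v.imI ^ 2 + v.imJ ^ 2 + v.imK ^ 2 = 1)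
    (hwn : w.imI ^ 2 + w.imJ ^ 2 + w.imK ^ 2 = 1) :
    ∃ q : Quaternion ℝ, q ≠ 0 ∧ v * q = q * w := by
  have hv2 := qsq_neg_one v hv hvn
  have hw2 := qsq_neg_one w hw hwn
  by_cases h : (1 : Quaternion ℝ) - v * w = 0
  · -- then w = -v
    have hvw : v * w = 1 := by rw [sub_eq_zero] at h; exact h.symm
    have hwv : w = -v := by
      have h5 : v * (v * w) = v * 1 := by rw [hvw]
      rw [← mul_assoc, hv2] at h5
      have h6 : v = -w := by simpa using h5.symm
      rw [h6, neg_neg]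
    set x : Quaternion ℝ := ⟨0, 1, 0, 0⟩ with hxdef
    set y : Quaternion ℝ := ⟨0, 0, 1, 0⟩ with hydef
    by_cases hx : x + v * x * v = 0
    · refine ⟨y + v * y * v, ?_, by rw [hwv]; exact qanti v y hv2⟩
      rw [Quaternion.ext_iff] at hx
      simp only [show x.re = 0 from rfl, show x.imI = 1 from rfl, show x.imJ = 0 from rfl,
        show x.imK = 0 from rfl, Quaternion.re_add, Quaternion.imI_add, Quaternion.imJ_add,
        Quaternion.imK_add, Quaternion.re_mul, Quaternion.imI_mul, Quaternion.imJ_mul,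
        Quaternion.imK_mul, Quaternion.re_zero, Quaternion.imI_zero, Quaternion.imJ_zero,
        Quaternion.imK_zero, hv] at hx
      intro hc
      rw [Quaternion.ext_iff] at hc
      simp only [show y.re = 0 from rfl, show y.imI = 0 from rfl, show y.imJ = 1 from rfl,
        show y.imK = 0 from rfl, Quaternion.re_add, Quaternion.imI_add, Quaternion.imJ_add,
        Quaternion.imK_add, Quaternion.re_mul, Quaternion.imI_mul, Quaternion.imJ_mul,
        Quaternion.imK_mul, Quaternion.re_zero, Quaternion.imI_zero, Quaternion.imJ_zero,
        Quaternion.imK_zero, hv] at hc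
      obtain ⟨hx1, hx2, hx3, hx4⟩ := hx
      obtain ⟨hc1, hc2, hc3, hc4⟩ := hc
      nlinarith [hx2, hx3, hx4, hc2, hc3, hc4, hvn, sq_nonneg v.imI, sq_nonneg v.imJ,
        sq_nonneg v.imK]
    · exact ⟨x + v * x * v, hx, by rw [hwv]; exact qanti v x hv2⟩
  · refine ⟨1 - v * w, h, ?_⟩
    have h1 : v * (1 - v * w) = v - (v * v) * w := by noncomm_ring
    have h2 : (1 - v * w) * w = w - v * (w * w) := by noncomm_ring
    rw [h1, h2, hv2, hw2]
    noncomm_ring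

set_option maxHeartbeats 1000000 in
theorem stmt17 (a b : ℝ) (v w : Quaternion ℝ)
    (hv : v.re = 0) (hvn : ‖v‖ = 1) (hw : w.re = 0) (hwn : ‖w‖ = 1)
    (l r : Quaternion ℝ)
    (hl : l = (Real.cos a : ℝ) + Real.sin a • v)
    (hr : r = (Real.cos b : ℝ) + Real.sin b • w)
    (L : Module.End ℝ (Quaternion ℝ))
    (hL : L = (LinearMap.mulRight ℝ r⁻¹).comp (LinearMap.mulLeft ℝ l))
    (hid : L ≠ LinearMap.id) (hnegid : L ≠ -LinearMap.id) :
    Module.finrank ℝ (Module.End.eigenspace L 1) = 2 ↔ Real.cos a = Real.cos b := by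
  have hvs := qsum_of_norm v hv hvn
  have hws := qsum_of_norm w hw hwn
  have hca : l.re = Real.cos a := by simp [hl, hv]
  have hcb : r.re = Real.cos b := by simp [hr, hw]
  have hrn : Quaternion.normSq r = 1 := by
    rw [Quaternion.normSq_def', hr]
    simp [hw]
    nlinarith [hws, Real.sin_sq_add_cos_sq b]
  have hr0 : r ≠ 0 := by
    intro h0
    rw [h0] at hrn
    simp at hrn
  have mem_iff : ∀ q : Quaternion ℝ, q ∈ Module.End.eigenspace L 1 ↔ l * q = q * r := by
    intro q
    rw [Module.End.mem_eigenspace_iff, hL]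
    simp only [LinearMap.comp_apply, LinearMap.mulLeft_apply, LinearMap.mulRight_apply, one_smul]
    rw [← div_eq_mul_inv, div_eq_iff hr0]
  constructor
  · -- finrank = 2 → cos a = cos b
    intro hfr
    by_contra hne
    have hpos : 0 < Module.finrank ℝ (Module.End.eigenspace L 1) := by rw [hfr]; norm_num
    rw [Module.finrank_pos_iff_exists_ne_zero] at hpos
    obtain ⟨⟨q, hqmem⟩, hq0⟩ := hpos
    have hqne : q ≠ 0 := fun h => hq0 (Subtype.ext h)
    rw [mem_iff] at hqmem
    have hN : Quaternion.normSq q ≠ 0 := by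
      simpa [Quaternion.normSq_eq_zero] using hqne
    have e1 : l * (q * star q) = (q * r) * star q := by rw [← mul_assoc, hqmem]
    rw [Quaternion.self_mul_star] at e1
    have e2 : ((q * r) * star q).re = ((star q * q) * r).re := by
      simp only [Quaternion.re_mul, Quaternion.imI_mul, Quaternion.imJ_mul, Quaternion.imK_mul,
        Quaternion.re_star, Quaternion.imI_star, Quaternion.imJ_star, Quaternion.imK_star]
      ring
    rw [Quaternion.star_mul_self] at e2
    have e3 : (l * ((Quaternion.normSq q : ℝ) : Quaternion ℝ)).re = l.re * Quaternion.normSq q := by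
      simp
    have e4 : (((Quaternion.normSq q : ℝ) : Quaternion ℝ) * r).re = Quaternion.normSq q * r.re := by
      simp
    have e5 : l.re * Quaternion.normSq q = Quaternion.normSq q * r.re := by
      rw [← e3, ← e4, ← e2, e1]
    rw [hca, hcb] at e5
    apply hne
    have := mul_right_cancel₀ hN (by linarith [e5] : Real.cos a * Quaternion.normSq q
      = Real.cos b * Quaternion.normSq q)
    exact this
  · intro hc
    have hs2 : Real.sin b ^ 2 = Real.sin a ^ 2 := by
      linear_combination Real.sin_sq_add_cos_sq b - Real.sin_sq_add_cos_sq a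
        + (Real.cos a + Real.cos b) * hc
    by_cases hsa : Real.sin a = 0
    · -- then L = id, contradiction
      exfalso
      apply hid
      have hsb : Real.sin b = 0 := by
        have h9 : Real.sin b ^ 2 = 0 := by rw [hs2, hsa]; ring
        exact pow_eq_zero_iff (two_ne_zero) |>.mp h9
      have hcn : Real.cos a ≠ 0 := by
        intro h0
        nlinarith [Real.sin_sq_add_cos_sq a]
      refine LinearMap.ext fun q => ?_
      rw [hL]
      simp only [LinearMap.comp_apply, LinearMap.mulLeft_apply, LinearMap.mulRight_apply,
        LinearMap.id_coe, id_eq]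
      rw [hl, hr, hsa, hsb, hc]
      simp only [zero_smul, add_zero]
      rw [← Quaternion.coe_inv, Quaternion.coe_mul_eq_smul, Quaternion.mul_coe_eq_smul,
        smul_smul]
      rw [inv_mul_cancel₀ (hc ▸ hcn), one_smul]
    · -- main case
      let w' : Quaternion ℝ := (Real.sin b / Real.sin a) • w
      have hw'def : w' = (Real.sin b / Real.sin a) • w := rfl
      have hw're : w'.re = 0 := by simp [hw'def, hw]
      have hq2 : (Real.sin b / Real.sin a) ^ 2 = 1 := by
        rw [div_pow, hs2]
        exact div_self (pow_ne_zero 2 hsa)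
      have hw's : w'.imI ^ 2 + w'.imJ ^ 2 + w'.imK ^ 2 = 1 := by
        simp only [hw'def, Quaternion.imI_smul, Quaternion.imJ_smul, Quaternion.imK_smul,
          smul_eq_mul]
        linear_combination (w.imI ^ 2 + w.imJ ^ 2 + w.imK ^ 2) * hq2 + hws
      have hsw : Real.sin b • w = Real.sin a • w' := by
        rw [hw'def, smul_smul, mul_div_cancel₀ _ hsa]
      have eq_iff : ∀ q : Quaternion ℝ, l * q = q * r ↔ v * q = q * w' := by
        intro q
        rw [hl, hr, hc, hsw]
        rw [add_mul, mul_add, smul_mul_assoc, mul_smul_comm,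
          Quaternion.coe_mul_eq_smul, Quaternion.mul_coe_eq_smul]
        constructor
        · intro h
          exact smul_right_injective (Quaternion ℝ) hsa (add_left_cancel h)
        · intro h
          rw [h]
      obtain ⟨q0, hq0ne, hq0⟩ := qexists v w' hv hw're hvs hw's
      have hv2 := qsq_neg_one v hv hvs
      have hspan : Module.End.eigenspace L 1 = Submodule.span ℝ {q0, v * q0} := by
        ext q
        rw [mem_iff, eq_iff, Submodule.mem_span_pair]
        constructor
        · intro h
          set p := q * q0⁻¹ with hp
          have hq : q = p * q0 := by
            rw [hp, mul_assoc, inv_mul_cancel₀ hq0ne, mul_one]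
          have hcomm : v * p = p * v := by
            have hk : w' * q0⁻¹ = q0⁻¹ * v := by
              have e1 : q0 * (w' * q0⁻¹) = v := by
                rw [← mul_assoc, ← hq0, mul_assoc, mul_inv_cancel₀ hq0ne, mul_one]
              have e2 : q0 * (q0⁻¹ * v) = v := by
                rw [← mul_assoc, mul_inv_cancel₀ hq0ne, one_mul]
              exact mul_left_cancel₀ hq0ne (e1.trans e2.symm)
            calc v * p = (v * q) * q0⁻¹ := by rw [hp, mul_assoc]
              _ = (q * w') * q0⁻¹ := by rw [h]
              _ = q * (w' * q0⁻¹) := by rw [mul_assoc]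
              _ = q * (q0⁻¹ * v) := by rw [hk]
              _ = p * v := by rw [hp, mul_assoc]
          have hpd := qcomm v p hv hvs hcomm
          refine ⟨p.re, v.imI * p.imI + v.imJ * p.imJ + v.imK * p.imK, ?_⟩
          have h9 : p * q0
              = p.re • q0 + (v.imI * p.imI + v.imJ * p.imJ + v.imK * p.imK) • (v * q0) := by
            conv_lhs => rw [hpd]
            rw [add_mul, smul_mul_assoc, Quaternion.coe_mul_eq_smul]
          rw [← h9]
          exact hq.symm
        · rintro ⟨s, t, rfl⟩
          have hw'2 := qsq_neg_one w' hw're hw's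
          have hvvq : v * (v * q0) = -q0 := by rw [← mul_assoc, hv2, neg_one_mul]
          have hvqw : v * q0 * w' = -q0 := by rw [hq0, mul_assoc, hw'2, mul_neg_one]
          rw [mul_add, add_mul, mul_smul_comm, mul_smul_comm, smul_mul_assoc, smul_mul_assoc,
            hvvq, hvqw, hq0]
      rw [hspan]
      have hli : LinearIndependent ℝ ![q0, v * q0] := by
        rw [LinearIndependent.pair_iff]
        intro s t hst
        have h8 : ((s : Quaternion ℝ) + t • v) * q0 = 0 := by
          rw [add_mul, smul_mul_assoc, Quaternion.coe_mul_eq_smul]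
          exact hst
        rcases mul_eq_zero.mp h8 with h0 | h0
        · rw [Quaternion.ext_iff] at h0
          simp [hv] at h0
          obtain ⟨h1, h2, h3, h4⟩ := h0
          refine ⟨h1, ?_⟩
          by_contra ht
          have i1 : v.imI = 0 := h2.resolve_left ht
          have i2 : v.imJ = 0 := h3.resolve_left ht
          have i3 : v.imK = 0 := h4.resolve_left ht
          rw [i1, i2, i3] at hvs
          norm_num at hvs
        · exact absurd h0 hq0ne
      have hcard := finrank_span_eq_card hli
      simp only [Fintype.card_fin] at hcard
      rw [show ({q0, v * q0} : Set (Quaternion ℝ)) = Set.range ![q0, v * q0] by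
        ext z; simp [Matrix.range_cons, Matrix.range_empty, or_comm]]
      exact hcard
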